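/- For every s ∈ ℂ, on (𝔳 × 𝔷) ∖ {(0,0)} one has Δ₂ K_s = ( 4s p₂ |X|² + 8s(2s+q−1) |X₂|² ) K_{s−1}. -/

import Mathlib

open scoped InnerProductSpace

noncomputable section

/-- The left-invariant vector field on `N = 𝔳 × 𝔷` associated to `S ∈ 𝔳`:
`(Sf)(X,Z) = ∂_𝔳 f(X,Z)[S] - ½ ∂_𝔷 f(X,Z)[[S,X]]`. -/
def vfV {V W : Type*} [NormedAddCommGroup V] [InnerProductSpace ℝ V]
    [NormedAddCommGroup W] [InnerProductSpace ℝ W]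
    (br : V →ₗ[ℝ] V →ₗ[ℝ] W) (S : V) (f : V × W → ℂ) : V × W → ℂ :=
  fun x => fderiv ℝ f x (S, 0) - (1/2 : ℂ) * fderiv ℝ f x (0, br S x.1)

/-- The left-invariant vector field associated to `T ∈ 𝔷`: `(Tf)(X,Z) = ∂_𝔷 f(X,Z)[T]`. -/
def vfW {V W : Type*} [NormedAddCommGroup V] [InnerProductSpace ℝ V]
    [NormedAddCommGroup W] [InnerProductSpace ℝ W]
    (T : W) (f : V × W → ℂ) : V × W → ℂ :=
  fun x => fderiv ℝ f x (0, T)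

/-- Sub-Laplacian `∑_{j ∈ fs} S_j²` associated to a family of vectors in `𝔳`. -/
def subLap {V W : Type*} [NormedAddCommGroup V] [InnerProductSpace ℝ V]
    [NormedAddCommGroup W] [InnerProductSpace ℝ W] {ι : Type*}
    (br : V →ₗ[ℝ] V →ₗ[ℝ] W) (fs : Finset ι) (S : ι → V) (f : V × W → ℂ) : V × W → ℂ :=
  fun x => ∑ j ∈ fs, vfV br (S j) (vfV br (S j) f) x

/-- Central Laplacian `∑_{j ∈ fs} T_j²` associated to a family of vectors in `𝔷`. -/
def boxLap {V W : Type*} [NormedAddCommGroup V] [InnerProductSpace ℝ V]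
    [NormedAddCommGroup W] [InnerProductSpace ℝ W] {ι : Type*}
    (fs : Finset ι) (T : ι → W) (f : V × W → ℂ) : V × W → ℂ :=
  fun x => ∑ j ∈ fs, vfW (T j) (vfW (T j) f) x

/-- The norm function `K(X,Z) = |X|⁴ + |Z|²`. -/
def Kfun {V W : Type*} [NormedAddCommGroup V] [NormedAddCommGroup W] (x : V × W) : ℝ :=
  ‖x.1‖^4 + ‖x.2‖^2

/-- The complex power `K_s = K^s`. -/
def Ks {V W : Type*} [NormedAddCommGroup V] [NormedAddCommGroup W] (s : ℂ) (x : V × W) : ℂ :=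
  (Kfun x : ℂ) ^ s

/-- `ρ = (p+2q)/2` as a complex number. -/
def rhoC (p q : ℕ) : ℂ := ((p : ℂ) + 2*q)/2

/-- `B(s) = 4s(4s+2ρ-2)`. -/
def Bc (p q : ℕ) (s : ℂ) : ℂ := 4*s*(4*s + 2*(rhoC p q) - 2)

/-- The component `X₂` of `X ∈ 𝔳` in `𝔳₂ = 𝔳₁ᗮ`. -/
def projPerp {V : Type*} [NormedAddCommGroup V] [InnerProductSpace ℝ V]
    [FiniteDimensional ℝ V] (V₁ : Submodule ℝ V) (X : V) : V :=
  (Submodule.orthogonalProjectionOnto V₁ᗮ X : V)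



set_option linter.unusedSectionVars false
set_option maxHeartbeats 1000000

section Calc
variable {V W : Type*} [NormedAddCommGroup V] [InnerProductSpace ℝ V]
    [NormedAddCommGroup W] [InnerProductSpace ℝ W]

lemma Kfun_pos {x : V × W} (hx : x ≠ 0) : 0 < Kfun x := by
  have h : x.1 ≠ 0 ∨ x.2 ≠ 0 := by
    by_contra h; push_neg at h; exact hx (Prod.ext h.1 h.2)
  unfold Kfun
  rcases h with h | h
  · have h1 : 0 < ‖x.1‖ ^ 4 := pow_pos (norm_pos_iff.2 h) 4
    nlinarith [sq_nonneg ‖x.2‖]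
  · have h1 : 0 < ‖x.2‖ ^ 2 := pow_pos (norm_pos_iff.2 h) 2
    nlinarith [pow_nonneg (norm_nonneg x.1) 4]

lemma Kfun_eq : (Kfun : V × W → ℝ)
    = fun y => ⟪y.1, y.1⟫_ℝ * ⟪y.1, y.1⟫_ℝ + ⟪y.2, y.2⟫_ℝ := by
  funext y
  simp only [Kfun, real_inner_self_eq_norm_sq]
  ring

lemma Kfun_diff (x : V × W) : DifferentiableAt ℝ (Kfun : V × W → ℝ) x := by
  rw [Kfun_eq]
  exact (((differentiableAt_fst.inner ℝ differentiableAt_fst).mul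
    (differentiableAt_fst.inner ℝ differentiableAt_fst))).add
    (differentiableAt_snd.inner ℝ differentiableAt_snd)

lemma Kfun_fderiv (x v : V × W) :
    fderiv ℝ (Kfun : V × W → ℝ) x v
      = 4*‖x.1‖^2*⟪x.1, v.1⟫_ℝ + 2*⟪x.2, v.2⟫_ℝ := by
  rw [Kfun_eq]
  have h1 : DifferentiableAt ℝ (fun y : V × W => ⟪y.1, y.1⟫_ℝ) x :=
    differentiableAt_fst.inner ℝ differentiableAt_fst
  have h2 : DifferentiableAt ℝ (fun y : V × W => ⟪y.2, y.2⟫_ℝ) x :=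
    differentiableAt_snd.inner ℝ differentiableAt_snd
  rw [fderiv_fun_add (h1.fun_mul h1) h2, ContinuousLinearMap.add_apply,
    fderiv_fun_mul h1 h1]
  simp only [ContinuousLinearMap.add_apply, ContinuousLinearMap.smul_apply, smul_eq_mul]
  rw [fderiv_inner_apply (𝕜 := ℝ) differentiableAt_fst differentiableAt_fst,
    fderiv_inner_apply (𝕜 := ℝ) differentiableAt_snd differentiableAt_snd]
  simp only [fderiv_fst, fderiv_snd, ContinuousLinearMap.coe_fst', ContinuousLinearMap.coe_snd']
  rw [real_inner_self_eq_norm_sq, real_inner_comm v.1 x.1, real_inner_comm v.2 x.2]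
  ring

lemma cpow_comp_hasFDerivAt {E : Type*} [NormedAddCommGroup E] [NormedSpace ℝ E]
    {f : E → ℝ} {f' : E →L[ℝ] ℝ} {x : E} (hf : HasFDerivAt f f' x) (hpos : 0 < f x) (s : ℂ) :
    HasFDerivAt (fun y => ((f y : ℝ) : ℂ)^s)
      ((s * (f x:ℂ)^(s-1)) • (Complex.ofRealCLM.comp f')) x := by
  have hfc : HasFDerivAt (fun y => ((f y : ℝ) : ℂ)) (Complex.ofRealCLM.comp f') x :=
    Complex.ofRealCLM.hasFDerivAt.comp x hf
  have h1 : HasDerivAt (fun z : ℂ => z ^ s) (s * ((f x : ℝ):ℂ)^(s-1)) ((f x : ℝ) : ℂ) :=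
    (Complex.hasStrictDerivAt_cpow_const (by
      exact Complex.mem_slitPlane_iff.2 (Or.inl (by simpa using hpos)))).hasDerivAt
  exact h1.comp_hasFDerivAt x hfc

lemma Ks_hasFDerivAt {x : V × W} (hx : x ≠ 0) (s : ℂ) :
    HasFDerivAt (Ks s : V × W → ℂ)
      ((s * (Kfun x:ℂ)^(s-1)) • (Complex.ofRealCLM.comp (fderiv ℝ Kfun x))) x :=
  cpow_comp_hasFDerivAt (Kfun_diff x).hasFDerivAt (Kfun_pos hx) s

lemma Ks_diff {x : V × W} (hx : x ≠ 0) (s : ℂ) :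
    DifferentiableAt ℝ (Ks s : V × W → ℂ) x :=
  (Ks_hasFDerivAt hx s).differentiableAt

lemma Ks_fderiv {x : V × W} (hx : x ≠ 0) (s : ℂ) (v : V × W) :
    fderiv ℝ (Ks s : V × W → ℂ) x v
      = s * (Kfun x:ℂ)^(s-1) * ((4*‖x.1‖^2*⟪x.1, v.1⟫_ℝ + 2*⟪x.2, v.2⟫_ℝ : ℝ) : ℂ) := by
  rw [(Ks_hasFDerivAt hx s).fderiv]
  simp only [ContinuousLinearMap.smul_apply, ContinuousLinearMap.comp_apply,
    Complex.ofRealCLM_apply, smul_eq_mul, Kfun_fderiv]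
  try ring

variable (br : V →ₗ[ℝ] V →ₗ[ℝ] W)

/-- value of the first derivative field. -/
lemma vfV_Ks {x : V × W} (hx : x ≠ 0) (s : ℂ) (S : V) :
    vfV br S (Ks s) x
      = s * (Kfun x:ℂ)^(s-1)
        * ((4*‖x.1‖^2*⟪x.1, S⟫_ℝ - ⟪x.2, br S x.1⟫_ℝ : ℝ) : ℂ) := by
  unfold vfV
  rw [Ks_fderiv hx s (S, 0), Ks_fderiv hx s (0, br S x.1)]
  simp only [inner_zero_right]
  push_cast
  ring

variable [FiniteDimensional ℝ V]

/-- value of the second derivative field. -/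
lemma vfV2_Ks {x : V × W} (hx : x ≠ 0) (s : ℂ) (S : V) (hbrS : br S S = 0) :
    vfV br S (vfV br S (Ks s)) x
      = s*(s-1) * (Kfun x:ℂ)^(s-2)
          * (((4*‖x.1‖^2*⟪x.1, S⟫_ℝ - ⟪x.2, br S x.1⟫_ℝ : ℝ)):ℂ)^2
        + s * (Kfun x:ℂ)^(s-1)
          * ((8*⟪x.1, S⟫_ℝ^2 + 4*‖x.1‖^2*‖S‖^2 + (1/2)*‖br S x.1‖^2 : ℝ):ℂ) := by
  classical
  set bc : V →L[ℝ] W := LinearMap.toContinuousLinearMap (br S) with hbc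
  have hbc_apply : ∀ v : V, bc v = br S v := fun v => rfl
  set Lf : V × W → ℝ := fun y => 4*(⟪y.1, y.1⟫_ℝ *⟪y.1, S⟫_ℝ) - ⟪y.2, bc y.1⟫_ℝ with hLf
  set G : V × W → ℂ := fun y => s * ((Kfun y:ℂ)^(s-1) * ((Lf y : ℝ) : ℂ)) with hG
  -- differentiability pieces
  have hdm : DifferentiableAt ℝ (fun y : V × W => ⟪y.1, S⟫_ℝ) x :=
    differentiableAt_fst.inner ℝ (differentiableAt_const S)
  have hdn : DifferentiableAt ℝ (fun y : V × W => ⟪y.1, y.1⟫_ℝ) x :=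
    differentiableAt_fst.inner ℝ differentiableAt_fst
  have hdbc : DifferentiableAt ℝ (fun y : V × W => bc y.1) x :=
    (bc.differentiable.comp differentiable_fst).differentiableAt
  have hdw : DifferentiableAt ℝ (fun y : V × W => ⟪y.2, bc y.1⟫_ℝ) x :=
    differentiableAt_snd.inner ℝ hdbc
  have hdLf : DifferentiableAt ℝ Lf x := (((hdn.mul hdm)).const_mul 4).sub hdw
  -- derivative of Lf
  have hLf_fderiv : ∀ v : V × W, fderiv ℝ Lf x v
      = 4*((2*⟪x.1, v.1⟫_ℝ)*⟪x.1, S⟫_ℝ + ⟪x.1, x.1⟫_ℝ *⟪v.1, S⟫_ℝ)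
        - (⟪x.2, bc v.1⟫_ℝ + ⟪v.2, bc x.1⟫_ℝ) := by
    intro v
    rw [hLf]
    rw [fderiv_fun_sub ((hdn.fun_mul hdm).const_mul 4) hdw, ContinuousLinearMap.sub_apply,
      fderiv_const_mul (hdn.fun_mul hdm) 4, ContinuousLinearMap.smul_apply,
      fderiv_fun_mul hdn hdm]
    simp only [ContinuousLinearMap.add_apply, ContinuousLinearMap.smul_apply, smul_eq_mul]
    rw [fderiv_inner_apply (𝕜 := ℝ) differentiableAt_fst (differentiableAt_const S),
      fderiv_inner_apply (𝕜 := ℝ) differentiableAt_fst differentiableAt_fst,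
      fderiv_inner_apply (𝕜 := ℝ) differentiableAt_snd hdbc]
    have h1 : fderiv ℝ (fun y : V × W => bc y.1) x
        = bc.comp (ContinuousLinearMap.fst ℝ V W) := by
      exact (bc.comp (ContinuousLinearMap.fst ℝ V W)).fderiv
    simp only [fderiv_fst, fderiv_snd, fderiv_fun_const, Pi.zero_apply,
      ContinuousLinearMap.coe_fst', ContinuousLinearMap.coe_snd',
      ContinuousLinearMap.zero_apply, inner_zero_right, h1,
      ContinuousLinearMap.comp_apply, ContinuousLinearMap.coe_fst']
    rw [real_inner_comm v.1 x.1]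
    ring
  -- the first field agrees with G near x
  have hEq : vfV br S (Ks s) =ᶠ[nhds x] G := by
    have hmem : {y : V × W | y ≠ 0} ∈ nhds x := isOpen_compl_singleton.mem_nhds hx
    refine Filter.eventually_of_mem hmem fun y hy => ?_
    rw [vfV_Ks br hy s S, hG]
    simp only [hLf, hbc_apply, real_inner_self_eq_norm_sq]
    ring_nf
  -- replace the outer function
  have vfV_congr : ∀ f g : V × W → ℂ, f =ᶠ[nhds x] g → vfV br S f x = vfV br S g x := by
    intro f g h
    unfold vfV
    rw [h.fderiv_eq]
  rw [vfV_congr _ _ hEq]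
  -- compute the derivative of G at x applied to v
  have hdK : DifferentiableAt ℝ (fun y : V × W => (Kfun y:ℂ)^(s-1)) x := Ks_diff hx (s-1)
  have hdLC : DifferentiableAt ℝ (fun y : V × W => ((Lf y : ℝ):ℂ)) x :=
    Complex.ofRealCLM.differentiableAt.comp x hdLf
  have hLC_fderiv : ∀ v : V × W,
      fderiv ℝ (fun y : V × W => ((Lf y : ℝ):ℂ)) x v = ((fderiv ℝ Lf x v : ℝ) : ℂ) := by
    intro v
    have h : HasFDerivAt (fun y : V × W => ((Lf y : ℝ):ℂ))
        (Complex.ofRealCLM.comp (fderiv ℝ Lf x)) x :=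
      Complex.ofRealCLM.hasFDerivAt.comp x hdLf.hasFDerivAt
    rw [h.fderiv]
    rfl
  have hG_fderiv : ∀ v : V × W, fderiv ℝ G x v
      = s * (((s-1) * (Kfun x:ℂ)^(s-2)
            * ((4*‖x.1‖^2*⟪x.1, v.1⟫_ℝ + 2*⟪x.2, v.2⟫_ℝ : ℝ) : ℂ)) * ((Lf x : ℝ):ℂ)
          + (Kfun x:ℂ)^(s-1) * ((fderiv ℝ Lf x v : ℝ) : ℂ)) := by
    intro v
    rw [hG]
    rw [fderiv_const_mul (hdK.fun_mul hdLC) s, ContinuousLinearMap.smul_apply,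
      fderiv_fun_mul hdK hdLC]
    simp only [ContinuousLinearMap.add_apply, ContinuousLinearMap.smul_apply, smul_eq_mul]
    rw [hLC_fderiv]
    have : fderiv ℝ (fun y : V × W => (Kfun y:ℂ)^(s-1)) x v
        = (s-1) * (Kfun x:ℂ)^(s-1-1)
          * ((4*‖x.1‖^2*⟪x.1, v.1⟫_ℝ + 2*⟪x.2, v.2⟫_ℝ : ℝ) : ℂ) := Ks_fderiv hx (s-1) v
    rw [this]
    ring_nf
  -- assemble
  unfold vfV
  rw [hG_fderiv (S, 0), hG_fderiv (0, br S x.1)]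
  rw [hLf_fderiv (S, 0), hLf_fderiv (0, br S x.1)]
  simp only [inner_zero_right, inner_zero_left, hbc_apply, hbrS, map_zero]
  have hL : (Lf x : ℝ) = 4*‖x.1‖^2*⟪x.1, S⟫_ℝ - ⟪x.2, br S x.1⟫_ℝ := by
    simp only [hLf, hbc_apply, real_inner_self_eq_norm_sq]; ring
  have hnS : ⟪S, S⟫_ℝ = ‖S‖^2 := real_inner_self_eq_norm_sq S
  have hnb : ⟪br S x.1, br S x.1⟫_ℝ = ‖br S x.1‖^2 := real_inner_self_eq_norm_sq _
  rw [hL]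
  rw [real_inner_self_eq_norm_sq x.1]
  push_cast
  rw [hnS, hnb]
  push_cast
  ring

end Calc

/-- `Δ₂ K_s = (4sp₂|X|² + 8s(2s+q-1)|X₂|²) K_{s-1}` on `(𝔳 × 𝔷) ∖ {(0,0)}`. -/
theorem delta2Ks {V W : Type*} [NormedAddCommGroup V] [InnerProductSpace ℝ V]
    [NormedAddCommGroup W] [InnerProductSpace ℝ W]
    [FiniteDimensional ℝ V] [FiniteDimensional ℝ W]
    (p p₁ p₂ q : ℕ) (hp : Module.finrank ℝ V = p) (hq : Module.finrank ℝ W = q)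
    (V₁ : Submodule ℝ V) (hp₁ : Module.finrank ℝ V₁ = p₁)
    (hp₂ : Module.finrank ℝ V₁ᗮ = p₂)
    (br : V →ₗ[ℝ] V →ₗ[ℝ] W) (hbr : ∀ X : V, br X X = 0)
    (hbr12 : ∀ X ∈ V₁, ∀ Y ∈ V₁ᗮ, br X Y = 0)
    (J : W →ₗ[ℝ] V →ₗ[ℝ] V)
    (hJ : ∀ (z : W) (X Y : V), ⟪J z X, Y⟫_ℝ = ⟪z, br X Y⟫_ℝ)
    (hH : ∀ (z : W) (X : V), J z (J z X) = (-16 * ‖z‖^2) • X)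
    (S : OrthonormalBasis (Fin p) ℝ V)
    (hS : ∀ j : Fin p, ((j : ℕ) < p₁ → S j ∈ V₁) ∧ (p₁ ≤ (j : ℕ) → S j ∈ V₁ᗮ))
    (T : OrthonormalBasis (Fin q) ℝ W)
    (s : ℂ) :
    ∀ x : V × W, x ≠ 0 →
      subLap br (Finset.univ.filter fun j : Fin p => p₁ ≤ (j : ℕ)) (fun j => S j) (Ks s) x
        = (4*s*(p₂ : ℂ) * (‖x.1‖ : ℂ)^2
            + 8*s*(2*s + (q : ℂ) - 1) * (‖projPerp V₁ x.1‖ : ℂ)^2) * Ks (s-1) x := by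
  classical
  intro x hx
  set J₂ : Finset (Fin p) := Finset.univ.filter (fun j : Fin p => p₁ ≤ (j : ℕ)) with hJ₂
  -- basic bracket facts
  have hbr' : ∀ a b : V, br b a = -br a b := by
    intro a b
    have h := hbr (a + b)
    simp only [map_add, LinearMap.add_apply, hbr a, hbr b] at h
    have h' : br a b + br b a = 0 := by rw [← h]; abel
    exact eq_neg_of_add_eq_zero_right h'
  have skew : ∀ (z : W) (a b : V), ⟪J z a, b⟫_ℝ = -⟪J z b, a⟫_ℝ := by
    intro z a b
    rw [hJ, hJ, hbr' a b, inner_neg_right, neg_neg]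
  have hJJ : ∀ (z : W) (a b : V), ⟪J z a, J z b⟫_ℝ = 16*‖z‖^2 * ⟪a, b⟫_ℝ := by
    intro z a b
    rw [skew z a (J z b), hH, real_inner_smul_left, real_inner_comm b a]
    ring
  have hJmem : ∀ (z : W) (v : V), v ∈ V₁ᗮ → J z v ∈ V₁ᗮ := by
    intro z v hv
    rw [Submodule.mem_orthogonal]
    intro u hu
    rw [real_inner_comm, hJ, hbr' u v, hbr12 u hu v hv]
    simp
  set X2 : V := projPerp V₁ x.1 with hX2
  have hX2mem : X2 ∈ V₁ᗮ := Submodule.coe_mem _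
  have hX1mem : x.1 - X2 ∈ V₁ := by
    have h := Submodule.starProjection_add_starProjection_orthogonal (K := V₁) x.1
    have h2 : x.1 - X2 = (Submodule.orthogonalProjectionOnto V₁ x.1 : V) := by
      rw [sub_eq_iff_eq_add, hX2]
      unfold projPerp
      exact h.symm
    rw [h2]; exact Submodule.coe_mem _
  have hSmem : ∀ j ∈ J₂, S j ∈ V₁ᗮ := by
    intro j hj
    exact (hS j).2 (Finset.mem_filter.1 hj).2
  have parseval2 : ∀ u v : V, u ∈ V₁ᗮ → v ∈ V₁ᗮ →
      ∑ j ∈ J₂, ⟪u, S j⟫_ℝ * ⟪v, S j⟫_ℝ = ⟪u, v⟫_ℝ := by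
    intro u v hu hv
    have h0 := S.sum_inner_mul_inner u v
    rw [← Finset.sum_filter_add_sum_filter_not Finset.univ
      (fun j : Fin p => p₁ ≤ (j : ℕ))] at h0
    have hz : ∑ j ∈ Finset.univ.filter (fun j : Fin p => ¬ p₁ ≤ (j : ℕ)),
        ⟪u, S j⟫_ℝ * ⟪S j, v⟫_ℝ = 0 := by
      apply Finset.sum_eq_zero
      intro j hj
      have hjlt : (j : ℕ) < p₁ := not_le.1 (Finset.mem_filter.1 hj).2
      have hzz : ⟪S j, u⟫_ℝ = 0 :=
        Submodule.inner_right_of_mem_orthogonal ((hS j).1 hjlt) hu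
      have hzz' : ⟪u, S j⟫_ℝ = 0 := (real_inner_comm (S j) u).trans hzz
      rw [hzz', zero_mul]
    rw [hz, add_zero] at h0
    rw [← h0]
    exact Finset.sum_congr rfl fun j _ => by rw [real_inner_comm (S j) v]
  have cardJ₂ : J₂.card = p₂ := by
    have hsum : p₁ + p₂ = p := by
      rw [← hp₁, ← hp₂, ← hp]; exact V₁.finrank_add_finrank_orthogonal
    rcases lt_or_ge p₁ p with h | h
    · have he : J₂ = Finset.Ici (⟨p₁, h⟩ : Fin p) := by
        ext j; simp [hJ₂, Finset.mem_Ici, Fin.le_def]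
      rw [he, Fin.card_Ici]
      simp only []
      omega
    · have he : J₂ = ∅ := by
        ext j
        simp only [hJ₂, Finset.mem_filter, Finset.mem_univ, true_and,
          Finset.notMem_empty, iff_false]
        have := j.isLt
        omega
      rw [he, Finset.card_empty]
      omega
  -- per-j facts
  have hbrj : ∀ j : Fin p, S j ∈ V₁ᗮ → br (S j) x.1 = br (S j) X2 := by
    intro j hj
    have h0 : br (x.1 - X2) (S j) = 0 := hbr12 _ hX1mem _ hj
    have h1 : br (S j) (x.1 - X2) = 0 := by rw [hbr', h0, neg_zero]
    rw [map_sub] at h1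
    exact sub_eq_zero.1 h1
  have hinnj : ∀ j : Fin p, S j ∈ V₁ᗮ → ⟪x.1, S j⟫_ℝ = ⟪X2, S j⟫_ℝ := by
    intro j hj
    have h0 : ⟪x.1 - X2, S j⟫_ℝ = 0 :=
      Submodule.inner_right_of_mem_orthogonal hX1mem hj
    rw [inner_sub_left] at h0
    linarith
  set u : V := (4*‖x.1‖^2) • X2 + J x.2 X2 with hu
  have hu_mem : u ∈ V₁ᗮ :=
    V₁ᗮ.add_mem (V₁ᗮ.smul_mem _ hX2mem) (hJmem _ _ hX2mem)
  have hLj : ∀ j : Fin p, S j ∈ V₁ᗮ →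
      4*‖x.1‖^2 * ⟪x.1, S j⟫_ℝ - ⟪x.2, br (S j) x.1⟫_ℝ = ⟪u, S j⟫_ℝ := by
    intro j hj
    rw [hinnj j hj, hbrj j hj]
    have h1 : ⟪x.2, br (S j) X2⟫_ℝ = -⟪J x.2 X2, S j⟫_ℝ := by
      rw [← hJ, skew]
    rw [h1, hu, inner_add_left, real_inner_smul_left]
    ring
  have hX2J : ⟪X2, J x.2 X2⟫_ℝ = 0 := by
    rw [real_inner_comm, hJ, hbr, inner_zero_right]
  have hinner_u : ⟪u, u⟫_ℝ = 16 * ‖X2‖^2 * Kfun x := by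
    have hX2J' : ⟪J x.2 X2, X2⟫_ℝ = 0 := (real_inner_comm _ _).trans hX2J
    rw [hu]
    simp only [inner_add_left, inner_add_right, real_inner_smul_left,
      real_inner_smul_right, hJJ, hX2J, hX2J', real_inner_self_eq_norm_sq]
    rw [norm_smul]
    simp only [Real.norm_eq_abs]
    rw [abs_of_nonneg (by positivity)]
    unfold Kfun
    ring
  have hsum1 : ∑ j ∈ J₂, (4*‖x.1‖^2 * ⟪x.1, S j⟫_ℝ - ⟪x.2, br (S j) x.1⟫_ℝ)^2
      = 16 * ‖X2‖^2 * Kfun x := by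
    calc ∑ j ∈ J₂, (4*‖x.1‖^2 * ⟪x.1, S j⟫_ℝ - ⟪x.2, br (S j) x.1⟫_ℝ)^2
        = ∑ j ∈ J₂, ⟪u, S j⟫_ℝ * ⟪u, S j⟫_ℝ := by
          refine Finset.sum_congr rfl fun j hj => ?_
          rw [hLj j (hSmem j hj)]; ring
      _ = ⟪u, u⟫_ℝ := parseval2 u u hu_mem hu_mem
      _ = 16 * ‖X2‖^2 * Kfun x := hinner_u
  have hsumA : ∑ j ∈ J₂, ⟪x.1, S j⟫_ℝ^2 = ‖X2‖^2 := by
    calc ∑ j ∈ J₂, ⟪x.1, S j⟫_ℝ^2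
        = ∑ j ∈ J₂, ⟪X2, S j⟫_ℝ * ⟪X2, S j⟫_ℝ := by
          refine Finset.sum_congr rfl fun j hj => ?_
          rw [hinnj j (hSmem j hj)]; ring
      _ = ⟪X2, X2⟫_ℝ := parseval2 X2 X2 hX2mem hX2mem
      _ = ‖X2‖^2 := real_inner_self_eq_norm_sq X2
  have hsumN : ∑ j ∈ J₂, ‖S j‖^2 = (p₂ : ℝ) := by
    have h1 : ∀ j : Fin p, ‖S j‖ = 1 := S.orthonormal.1
    calc ∑ j ∈ J₂, ‖S j‖^2 = ∑ _j ∈ J₂, (1:ℝ) := by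
          refine Finset.sum_congr rfl fun j _ => by rw [h1]; norm_num
      _ = (J₂.card : ℝ) := by rw [Finset.sum_const, nsmul_eq_mul, mul_one]
      _ = (p₂ : ℝ) := by rw [cardJ₂]
  have hsumB : ∑ j ∈ J₂, ‖br (S j) x.1‖^2 = 16 * q * ‖X2‖^2 := by
    have hv : ∀ k : Fin q, J (T k) X2 ∈ V₁ᗮ := fun k => hJmem _ _ hX2mem
    have hT1 : ∀ k : Fin q, ‖T k‖ = 1 := T.orthonormal.1
    calc ∑ j ∈ J₂, ‖br (S j) x.1‖^2
        = ∑ j ∈ J₂, ∑ k : Fin q, ⟪J (T k) X2, S j⟫_ℝ * ⟪J (T k) X2, S j⟫_ℝ := by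
          refine Finset.sum_congr rfl fun j hj => ?_
          have hj' := hSmem j hj
          rw [hbrj j hj', ← real_inner_self_eq_norm_sq,
            ← T.sum_inner_mul_inner (br (S j) X2) (br (S j) X2)]
          refine Finset.sum_congr rfl fun k _ => ?_
          have h1 : ⟪T k, br (S j) X2⟫_ℝ = -⟪J (T k) X2, S j⟫_ℝ := by
            rw [← hJ, skew]
          have h2 : ⟪br (S j) X2, T k⟫_ℝ = -⟪J (T k) X2, S j⟫_ℝ :=
            (real_inner_comm _ _).trans h1
          rw [h1, h2]
          ring
      _ = ∑ k : Fin q, ∑ j ∈ J₂, ⟪J (T k) X2, S j⟫_ℝ * ⟪J (T k) X2, S j⟫_ℝ :=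
          Finset.sum_comm
      _ = ∑ k : Fin q, 16*‖T k‖^2*‖X2‖^2 := by
          refine Finset.sum_congr rfl fun k _ => ?_
          rw [parseval2 _ _ (hv k) (hv k), hJJ, real_inner_self_eq_norm_sq]
      _ = 16 * q * ‖X2‖^2 := by
          simp only [hT1, one_pow, mul_one]
          rw [Finset.sum_const, Finset.card_univ, Fintype.card_fin, nsmul_eq_mul]
          ring
  have hsum2 : ∑ j ∈ J₂,
      (8*⟪x.1, S j⟫_ℝ^2 + 4*‖x.1‖^2*‖S j‖^2 + (1/2)*‖br (S j) x.1‖^2)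
      = 8*‖X2‖^2 + 4*‖x.1‖^2*(p₂:ℝ) + 8*(q:ℝ)*‖X2‖^2 := by
    rw [Finset.sum_add_distrib, Finset.sum_add_distrib,
      ← Finset.mul_sum, ← Finset.mul_sum, ← Finset.mul_sum,
      hsumA, hsumN, hsumB]
    ring
  -- assemble in ℂ
  have hKne : ((Kfun x : ℝ) : ℂ) ≠ 0 := by
    exact_mod_cast (Kfun_pos hx).ne'
  have hpow : ((Kfun x : ℝ) : ℂ)^(s-1) = ((Kfun x : ℝ):ℂ)^(s-2) * ((Kfun x : ℝ):ℂ) := by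
    have h1 : s - 1 = (s - 2) + 1 := by ring
    rw [h1, Complex.cpow_add _ _ hKne, Complex.cpow_one]
  calc subLap br J₂ (fun j => S j) (Ks s) x
      = ∑ j ∈ J₂, (s*(s-1) * (Kfun x:ℂ)^(s-2)
          * (((4*‖x.1‖^2*⟪x.1, S j⟫_ℝ - ⟪x.2, br (S j) x.1⟫_ℝ : ℝ)):ℂ)^2
        + s * (Kfun x:ℂ)^(s-1)
          * ((8*⟪x.1, S j⟫_ℝ^2 + 4*‖x.1‖^2*‖S j‖^2 + (1/2)*‖br (S j) x.1‖^2 : ℝ):ℂ)) := by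
        unfold subLap
        exact Finset.sum_congr rfl fun j _ => vfV2_Ks br hx s (S j) (hbr (S j))
    _ = s*(s-1) * (Kfun x:ℂ)^(s-2)
          * ((∑ j ∈ J₂, (4*‖x.1‖^2*⟪x.1, S j⟫_ℝ - ⟪x.2, br (S j) x.1⟫_ℝ)^2 : ℝ):ℂ)
        + s * (Kfun x:ℂ)^(s-1)
          * ((∑ j ∈ J₂, (8*⟪x.1, S j⟫_ℝ^2 + 4*‖x.1‖^2*‖S j‖^2
              + (1/2)*‖br (S j) x.1‖^2) : ℝ):ℂ) := by
        rw [Finset.sum_add_distrib, ← Finset.mul_sum, ← Finset.mul_sum]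
        push_cast
        ring
    _ = (4*s*(p₂ : ℂ) * (‖x.1‖ : ℂ)^2
            + 8*s*(2*s + (q : ℂ) - 1) * (‖X2‖ : ℂ)^2) * Ks (s-1) x := by
        rw [hsum1, hsum2]
        unfold Ks
        rw [hpow]
        push_cast
        ring
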